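/- Let k* = (k_i*)_{i=1}^n be a graphical degree sequence in the ultra-dense regime (so that the dual sequence ℓ* = (n−1−k_i*)_{i=1}^n is also graphical), and assume canonical parameters exist for k*. Let P_mic, P_can be the microcanonical and canonical ensembles with constraint k*, and P̂_mic, P̂_can those with constraint ℓ*. Then S_n(P_mic | P_can) = S_n(P̂_mic | P̂_can); that is, the relative entropy between the microcanonical and canonical ensembles is invariant under the duality map k_i* ↦ n−1−k_i*. -/

import Mathlib

open Filter Finset Asymptotics

/-- A simple undirected graph on `n` labelled vertices, given by its adjacency
indicators `g i j ∈ {0,1}` (as `Bool`), symmetric and with no loops. -/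
abbrev LabelledGraph (n : ℕ) : Type :=
  {g : Fin n → Fin n → Bool // (∀ i j, g i j = g j i) ∧ ∀ i, g i i = false}

noncomputable section

/-- The degree `k_i(G) = Σ_{j ≠ i} g_ij(G)` of vertex `i` in the graph `G`. -/
def degSeq {n : ℕ} (G : LabelledGraph n) (i : Fin n) : ℕ :=
  ∑ j ∈ Finset.univ.filter (fun j => j ≠ i), if G.1 i j then 1 else 0

/-- Canonical connection probabilities `p*_ij = x_i x_j / (1 + x_i x_j)`. -/
def pStar {n : ℕ} (x : Fin n → ℝ) (i j : Fin n) : ℝ := x i * x j / (1 + x i * x j)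

/-- The parameters `x` realise the degree sequence `k` as canonical averages:
`Σ_{j ≠ i} p*_ij = k_i` for all `i`. -/
def fitsDegrees {n : ℕ} (x : Fin n → ℝ) (k : Fin n → ℕ) : Prop :=
  ∀ i, ∑ j ∈ Finset.univ.filter (fun j => j ≠ i), pStar x i j = (k i : ℝ)

/-- Canonical ensemble probability
`P_can(G) = Π_{i<j} p_ij^{g_ij(G)} (1-p_ij)^{1-g_ij(G)}`. -/
def Pcan {n : ℕ} (p : Fin n → Fin n → ℝ) (G : LabelledGraph n) : ℝ :=
  ∏ ij ∈ Finset.univ.filter (fun ij : Fin n × Fin n => ij.1 < ij.2),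
    if G.1 ij.1 ij.2 then p ij.1 ij.2 else 1 - p ij.1 ij.2

/-- `Ω_k`: the number of graphs with degree sequence `k`. -/
def numGraphs (n : ℕ) (k : Fin n → ℕ) : ℕ :=
  (Finset.univ.filter (fun G : LabelledGraph n => degSeq G = k)).card

/-- Microcanonical ensemble: uniform on the graphs with degree sequence `k`. -/
def Pmic {n : ℕ} (k : Fin n → ℕ) (G : LabelledGraph n) : ℝ :=
  if degSeq G = k then ((numGraphs n k : ℝ))⁻¹ else 0

/-- Relative entropy `S_n(P_mic | P_can) = Σ_G P_mic(G) log (P_mic(G)/P_can(G))`. -/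
def relEnt (n : ℕ) (k : Fin n → ℕ) (p : Fin n → Fin n → ℝ) : ℝ :=
  ∑ G : LabelledGraph n, Pmic k G * Real.log (Pmic k G / Pcan p G)

/-- `f̄_n = (1/(2n)) Σ_{i=1}^n log (k_i (n-1-k_i) / n)`. -/
def fbar (n : ℕ) (k : Fin n → ℕ) : ℝ :=
  (1 / (2 * (n : ℝ))) * ∑ i, Real.log ((k i : ℝ) * ((n : ℝ) - 1 - (k i : ℝ)) / (n : ℝ))

/-- The canonical covariance matrix `Q` of the degrees:
`q_ij = p_ij (1 - p_ij)` for `i ≠ j` and `q_ii = Σ_{l ≠ i} p_il (1 - p_il)`. -/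
def Qmat {n : ℕ} (p : Fin n → Fin n → ℝ) : Matrix (Fin n) (Fin n) ℝ :=
  Matrix.of fun i j =>
    if i = j then ∑ l ∈ Finset.univ.filter (fun l => l ≠ i), p i l * (1 - p i l)
    else p i j * (1 - p i j)

/-- δ-tameness: `δ ≤ p_ij ≤ 1 - δ` for all `i ≠ j`. -/
def deltaTame {n : ℕ} (δ : ℝ) (p : Fin n → Fin n → ℝ) : Prop :=
  ∀ i j : Fin n, i ≠ j → δ ≤ p i j ∧ p i j ≤ 1 - δ

/-! ### Auxiliary lemmas for the duality proof -/

/-- The complement graph. -/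
def gcomp {n : ℕ} (G : LabelledGraph n) : LabelledGraph n :=
  ⟨fun i j => if i = j then false else !(G.1 i j), by
    constructor
    · intro i j
      rcases eq_or_ne i j with h | h
      · subst h; rfl
      · simp [h, h.symm, G.2.1 i j]
    · intro i; simp⟩

lemma gcomp_gcomp {n : ℕ} (G : LabelledGraph n) : gcomp (gcomp G) = G := by
  apply Subtype.ext
  funext i j
  rcases eq_or_ne i j with h | h
  · subst h; simp [gcomp, G.2.2 i]
  · simp [gcomp, h]

lemma card_filter_ne {n : ℕ} (i : Fin n) :
    (Finset.univ.filter (fun j => j ≠ i)).card = n - 1 := by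
  rw [Finset.filter_ne', Finset.card_erase_of_mem (Finset.mem_univ i)]
  simp

lemma degSeq_add_gcomp {n : ℕ} (G : LabelledGraph n) (i : Fin n) :
    degSeq G i + degSeq (gcomp G) i = n - 1 := by
  unfold degSeq
  rw [← Finset.sum_add_distrib]
  rw [← card_filter_ne i, Finset.card_eq_sum_ones]
  apply Finset.sum_congr rfl
  intro j hj
  have hij : ¬ (i = j) := fun h => (Finset.mem_filter.mp hj).2 h.symm
  simp [gcomp, hij]
  cases G.1 i j <;> simp

lemma degSeq_le {n : ℕ} (G : LabelledGraph n) (i : Fin n) : degSeq G i ≤ n - 1 := by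
  have := degSeq_add_gcomp G i; omega

lemma degSeq_gcomp {n : ℕ} (G : LabelledGraph n) (i : Fin n) :
    degSeq (gcomp G) i = n - 1 - degSeq G i := by
  have := degSeq_add_gcomp G i; omega

lemma degSeq_gcomp_iff {n : ℕ} (k : Fin n → ℕ) (hk : ∀ i, k i ≤ n - 1) (G : LabelledGraph n) :
    degSeq (gcomp G) = (fun i => n - 1 - k i) ↔ degSeq G = k := by
  constructor
  · intro h
    funext i
    have hi : degSeq (gcomp G) i = n - 1 - k i := congrFun h i
    rw [degSeq_gcomp] at hi
    have h1 := degSeq_le G i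
    have h2 := hk i
    omega
  · intro h
    funext i
    rw [degSeq_gcomp, congrFun h i]

lemma numGraphs_dual {n : ℕ} (k : Fin n → ℕ) (hk : ∀ i, k i ≤ n - 1) :
    numGraphs n (fun i => n - 1 - k i) = numGraphs n k := by
  unfold numGraphs
  apply Finset.card_bij' (fun G _ => gcomp G) (fun G _ => gcomp G)
  · intro G hG
    rw [Finset.mem_filter] at hG ⊢
    refine ⟨Finset.mem_univ _, funext fun i => ?_⟩
    have hGi : degSeq G i = n - 1 - k i := congrFun hG.2 i
    rw [degSeq_gcomp, hGi]
    have := hk i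
    omega
  · intro G hG
    rw [Finset.mem_filter] at hG ⊢
    exact ⟨Finset.mem_univ _, (degSeq_gcomp_iff k hk G).mpr hG.2⟩
  · intro G _; exact gcomp_gcomp G
  · intro G _; exact gcomp_gcomp G

lemma pStar_symm {n : ℕ} (x : Fin n → ℝ) (i j : Fin n) : pStar x j i = pStar x i j := by
  unfold pStar; rw [mul_comm]

lemma key_nonneg {u v : ℝ} (hu : 0 < u) (hv : 0 < v) :
    0 ≤ (u / (1 + u) - v / (1 + v)) * (Real.log u - Real.log v) := by
  rcases lt_trichotomy u v with h | h | h
  · have h1 : u / (1 + u) < v / (1 + v) := by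
      rw [div_lt_div_iff₀ (by linarith) (by linarith)]; nlinarith
    have h2 : Real.log u < Real.log v := Real.log_lt_log hu h
    nlinarith
  · subst h; simp
  · have h1 : v / (1 + v) < u / (1 + u) := by
      rw [div_lt_div_iff₀ (by linarith) (by linarith)]; nlinarith
    have h2 : Real.log v < Real.log u := Real.log_lt_log hv h
    nlinarith

lemma key_eq {u v : ℝ} (hu : 0 < u) (hv : 0 < v)
    (h : (u / (1 + u) - v / (1 + v)) * (Real.log u - Real.log v) = 0) : u = v := by
  by_contra hne
  rcases lt_or_gt_of_ne hne with hlt | hgt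
  · have h1 : u / (1 + u) < v / (1 + v) := by
      rw [div_lt_div_iff₀ (by linarith) (by linarith)]; nlinarith
    have h2 : Real.log u < Real.log v := Real.log_lt_log hu hlt
    nlinarith
  · have h1 : v / (1 + v) < u / (1 + u) := by
      rw [div_lt_div_iff₀ (by linarith) (by linarith)]; nlinarith
    have h2 : Real.log v < Real.log u := Real.log_lt_log hv hgt
    nlinarith

lemma sum_pairs_comm {n : ℕ} (f : Fin n → Fin n → ℝ) :
    ∑ i, ∑ j ∈ Finset.univ.filter (fun j => j ≠ i), f i j
      = ∑ i, ∑ j ∈ Finset.univ.filter (fun j => j ≠ i), f j i := by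
  simp_rw [Finset.sum_filter]
  rw [Finset.sum_comm]
  refine Finset.sum_congr rfl fun j _ => Finset.sum_congr rfl fun i _ => ?_
  rcases eq_or_ne i j with h | h
  · simp [h]
  · rw [if_pos h.symm, if_pos h]

/-- Uniqueness of the edge weights `x_i x_j` for a fitted degree sequence. -/
lemma xx_unique {n : ℕ} {x z : Fin n → ℝ} {k : Fin n → ℕ}
    (hx : ∀ i, 0 < x i) (hz : ∀ i, 0 < z i)
    (hfx : fitsDegrees x k) (hfz : fitsDegrees z k) :
    ∀ i j, i ≠ j → x i * x j = z i * z j := by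
  set F : Fin n → Fin n → ℝ := fun i j =>
    (pStar x i j - pStar z i j) * (Real.log (x i * x j) - Real.log (z i * z j)) with hF
  have hterm_nonneg : ∀ i j, 0 ≤ F i j := fun i j =>
    key_nonneg (mul_pos (hx i) (hx j)) (mul_pos (hz i) (hz j))
  have hD : ∀ i, ∑ j ∈ Finset.univ.filter (fun j => j ≠ i),
      (pStar x i j - pStar z i j) = 0 := by
    intro i
    rw [Finset.sum_sub_distrib, hfx i, hfz i, sub_self]
  have hS : ∑ i, ∑ j ∈ Finset.univ.filter (fun j => j ≠ i), F i j = 0 := by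
    have hsplit : ∀ i j : Fin n, F i j =
        (pStar x i j - pStar z i j) * (Real.log (x i) - Real.log (z i))
        + (pStar x i j - pStar z i j) * (Real.log (x j) - Real.log (z j)) := by
      intro i j
      rw [hF]
      simp only
      rw [Real.log_mul (ne_of_gt (hx i)) (ne_of_gt (hx j)),
          Real.log_mul (ne_of_gt (hz i)) (ne_of_gt (hz j))]
      ring
    simp_rw [hsplit]
    rw [Finset.sum_congr rfl (fun i _ => Finset.sum_add_distrib), Finset.sum_add_distrib]
    have h1 : ∑ i, ∑ j ∈ Finset.univ.filter (fun j => j ≠ i),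
        (pStar x i j - pStar z i j) * (Real.log (x i) - Real.log (z i)) = 0 := by
      refine Finset.sum_eq_zero fun i _ => ?_
      rw [← Finset.sum_mul, hD i, zero_mul]
    have h2 : ∑ i, ∑ j ∈ Finset.univ.filter (fun j => j ≠ i),
        (pStar x i j - pStar z i j) * (Real.log (x j) - Real.log (z j)) = 0 := by
      rw [sum_pairs_comm]
      refine Finset.sum_eq_zero fun i _ => ?_
      have : ∀ j, pStar x j i - pStar z j i = pStar x i j - pStar z i j := by
        intro j; unfold pStar; ring_nf
      simp_rw [this]
      rw [← Finset.sum_mul, hD i, zero_mul]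
    rw [h1, h2, add_zero]
  intro i j hij
  have hzero : F i j = 0 := by
    have houter := (Finset.sum_eq_zero_iff_of_nonneg
      (fun i _ => Finset.sum_nonneg fun j _ => hterm_nonneg i j)).mp hS i (Finset.mem_univ i)
    have hinner := (Finset.sum_eq_zero_iff_of_nonneg
      (fun j _ => hterm_nonneg i j)).mp houter j
      (Finset.mem_filter.mpr ⟨Finset.mem_univ j, hij.symm⟩)
    exact hinner
  exact key_eq (mul_pos (hx i) (hx j)) (mul_pos (hz i) (hz j)) hzero

/-- the relative entropy between the microcanonical and canonical
ensembles is invariant under the duality map `k_i* ↦ n - 1 - k_i*`. -/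
theorem relEnt_duality_invariance
    (n : ℕ) (k : Fin n → ℕ)
    (hgraphical : ∃ G : LabelledGraph n, degSeq G = k)
    (x : Fin n → ℝ) (hxpos : ∀ i, 0 < x i) (hfit : fitsDegrees x k)
    (hgraphicaldual : ∃ G : LabelledGraph n, degSeq G = fun i => n - 1 - k i)
    (y : Fin n → ℝ) (hypos : ∀ i, 0 < y i)
    (hfity : fitsDegrees y (fun i => n - 1 - k i)) :
    relEnt n k (pStar x) = relEnt n (fun i => n - 1 - k i) (pStar y) := by
  -- the degree sequence is bounded by n - 1
  obtain ⟨G₀, hG₀⟩ := hgraphical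
  have hk : ∀ i, k i ≤ n - 1 := by
    intro i; rw [← hG₀]; exact degSeq_le G₀ i
  -- z = 1/y fits k
  set z : Fin n → ℝ := fun i => (y i)⁻¹ with hzdef
  have hzpos : ∀ i, 0 < z i := fun i => inv_pos.mpr (hypos i)
  have hpz : ∀ i j : Fin n, pStar z i j = 1 - pStar y i j := by
    intro i j
    have h1 : (0:ℝ) < y i := hypos i
    have h2 : (0:ℝ) < y j := hypos j
    have h3 : (0:ℝ) < 1 + y i * y j := by positivity
    unfold pStar
    rw [hzdef]
    field_simp
    ring
  have hfz : fitsDegrees z k := by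
    intro i
    have hn1 : 1 ≤ n := i.pos
    simp_rw [hpz i]
    rw [Finset.sum_sub_distrib, hfity i, Finset.sum_const, card_filter_ne i,
        nsmul_eq_mul, mul_one]
    rw [Nat.cast_sub (hk i), Nat.cast_sub hn1, Nat.cast_one]
    ring
  -- hence x_i x_j = 1 / (y_i y_j), so p^y = 1 - p^x off the diagonal
  have hxz := xx_unique hxpos hzpos hfit hfz
  have hpxy : ∀ i j : Fin n, i ≠ j → pStar y i j = 1 - pStar x i j := by
    intro i j hij
    have h := hxz i j hij
    have hzx : pStar z i j = pStar x i j := by unfold pStar; rw [← h]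
    have := hpz i j
    linarith
  -- transfer the sum along the complement bijection
  have hinv : Function.Involutive (gcomp (n := n)) := gcomp_gcomp
  unfold relEnt
  rw [← Equiv.sum_comp (Function.Involutive.toPerm _ hinv)
    (fun G => Pmic (fun i => n - 1 - k i) G *
      Real.log (Pmic (fun i => n - 1 - k i) G / Pcan (pStar y) G))]
  apply Finset.sum_congr rfl
  intro G _
  have hPmic : Pmic (fun i => n - 1 - k i) ((Function.Involutive.toPerm _ hinv) G) = Pmic k G := by
    show Pmic (fun i => n - 1 - k i) (gcomp G) = Pmic k G
    unfold Pmic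
    rw [numGraphs_dual k hk]
    by_cases h : degSeq G = k
    · rw [if_pos h, if_pos ((degSeq_gcomp_iff k hk G).mpr h)]
    · rw [if_neg h, if_neg (fun hc => h ((degSeq_gcomp_iff k hk G).mp hc))]
  have hPcan : Pcan (pStar y) ((Function.Involutive.toPerm _ hinv) G) = Pcan (pStar x) G := by
    show Pcan (pStar y) (gcomp G) = Pcan (pStar x) G
    unfold Pcan
    apply Finset.prod_congr rfl
    intro ij hij
    have hlt : ij.1 < ij.2 := (Finset.mem_filter.mp hij).2
    have hne : ij.1 ≠ ij.2 := ne_of_lt hlt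
    have hg : (gcomp G).1 ij.1 ij.2 = !(G.1 ij.1 ij.2) := by
      simp [gcomp, hne]
    rw [hg, hpxy ij.1 ij.2 hne]
    cases G.1 ij.1 ij.2 <;> simp <;> ring
  rw [hPmic, hPcan]
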